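/- arXiv:1507.08968 — 2 statements merged into one kernel-verified Lean document; each statement's English description precedes it below -/
import Mathlib

section
/- If the submatrix 𝓛_f of the normalized Laplacian restricted to a proper nonempty subset f of vertices of a connected graph is taken, then 𝓛_f is positive definite and hence invertible. -/
open Matrix

private lemma sum_extend_zero {n : ℕ} (f : Finset (Fin n)) (g : Fin n → ℝ)
    (hg : ∀ i ∉ f, g i = 0) : ∑ i, g i = ∑ i : {i // i ∈ f}, g i := by
  rw [Finset.sum_coe_sort f g]
  exact (Finset.sum_subset (Finset.subset_univ f) (fun i _ hi => hg i hi)).symm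

private lemma quad_extend {n : ℕ} (M : Matrix (Fin n) (Fin n) ℝ) (f : Finset (Fin n))
    (x : {i // i ∈ f} → ℝ) :
    x ⬝ᵥ (M.submatrix (fun i : {i // i ∈ f} => (i : Fin n))
        (fun i : {i // i ∈ f} => (i : Fin n))) *ᵥ x =
      (fun i => if h : i ∈ f then x ⟨i, h⟩ else 0) ⬝ᵥ
        M *ᵥ (fun i => if h : i ∈ f then x ⟨i, h⟩ else 0) := by
  set y : Fin n → ℝ := fun i => if h : i ∈ f then x ⟨i, h⟩ else 0 with hy
  have hy0 : ∀ i ∉ f, y i = 0 := fun i hi => by simp [hy, hi]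
  have hinner : ∀ i : {i // i ∈ f}, (M *ᵥ y) (i : Fin n) =
      ∑ j : {j // j ∈ f}, M (i : Fin n) (j : Fin n) * x j := by
    intro i
    show ∑ j, M (i : Fin n) j * y j = _
    rw [sum_extend_zero f _ (fun j hj => by simp [hy0 j hj])]
    exact Finset.sum_congr rfl fun j _ => by simp [hy, j.2]
  show ∑ i : {i // i ∈ f}, x i * _ = ∑ i, y i * (M *ᵥ y) i
  rw [sum_extend_zero f _ (fun i hi => by simp [hy0 i hi])]
  refine Finset.sum_congr rfl fun i _ => ?_
  rw [hinner i]
  have : y (i : Fin n) = x i := by simp [hy, i.2]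
  rw [this]
  rfl

theorem restricted_laplacian_posdef
    (n : ℕ) (G : SimpleGraph (Fin n)) [DecidableRel G.Adj]
    (hconn : G.Connected) (hdeg : ∀ i, 0 < G.degree i)
    (f : Finset (Fin n)) (hne : f.Nonempty) (hproper : f ≠ Finset.univ) :
    let A : Matrix (Fin n) (Fin n) ℝ := G.adjMatrix ℝ
    let D : Matrix (Fin n) (Fin n) ℝ := Matrix.diagonal fun i => (G.degree i : ℝ)
    let DnegHalf : Matrix (Fin n) (Fin n) ℝ :=
      Matrix.diagonal fun i => (Real.sqrt (G.degree i : ℝ))⁻¹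
    let 𝓛 : Matrix (Fin n) (Fin n) ℝ := DnegHalf * (D - A) * DnegHalf
    let 𝓛f : Matrix {i // i ∈ f} {i // i ∈ f} ℝ :=
      𝓛.submatrix (fun i => (i : Fin n)) (fun i => (i : Fin n))
    𝓛f.PosDef ∧ IsUnit 𝓛f := by
  intro A D DnegHalf 𝓛 𝓛f
  have hDA : D - A = G.lapMatrix ℝ := rfl
  set L : Matrix (Fin n) (Fin n) ℝ := G.lapMatrix ℝ with hL
  have hsq : ∀ i, 0 < Real.sqrt (G.degree i : ℝ) := fun i =>
    Real.sqrt_pos.mpr (by exact_mod_cast hdeg i)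
  have hLsymm : L.IsSymm := G.isSymm_lapMatrix ℝ
  have hsymm : 𝓛.IsSymm := by
    show (DnegHalf * (D - A) * DnegHalf).IsSymm
    rw [hDA]
    show ((Matrix.diagonal fun i => (Real.sqrt (G.degree i : ℝ))⁻¹) * L *
      (Matrix.diagonal fun i => (Real.sqrt (G.degree i : ℝ))⁻¹)).IsSymm
    rw [Matrix.IsSymm, Matrix.transpose_mul, Matrix.transpose_mul, Matrix.diagonal_transpose,
      hLsymm, Matrix.mul_assoc]
  have hherm : 𝓛f.IsHermitian := by
    ext i j
    show 𝓛 (j : Fin n) (i : Fin n) = 𝓛 (i : Fin n) (j : Fin n)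
    exact congrFun (congrFun hsymm (i : Fin n)) (j : Fin n)
  have hpd : 𝓛f.PosDef := by
    refine posDef_iff_dotProduct_mulVec.mpr ⟨hherm, fun x hx => ?_⟩
    set y : Fin n → ℝ := fun i => if h : i ∈ f then x ⟨i, h⟩ else 0 with hy
    set w : Fin n → ℝ := fun i => (Real.sqrt (G.degree i : ℝ))⁻¹ * y i with hw
    have key : star x ⬝ᵥ 𝓛f *ᵥ x = w ⬝ᵥ L *ᵥ w := by
      have h1 : star x ⬝ᵥ 𝓛f *ᵥ x = y ⬝ᵥ 𝓛 *ᵥ y := by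
        rw [star_trivial]
        exact quad_extend 𝓛 f x
      have hwvec : DnegHalf *ᵥ y = w := by
        ext i
        show ((Matrix.diagonal fun i => (Real.sqrt (G.degree i : ℝ))⁻¹) *ᵥ y) i = w i
        simp [hw, mulVec_diagonal]
      have hwvec' : y ᵥ* DnegHalf = w := by
        ext i
        show (y ᵥ* (Matrix.diagonal fun i => (Real.sqrt (G.degree i : ℝ))⁻¹)) i = w i
        simp [hw, vecMul_diagonal, mul_comm]
      have h2 : y ⬝ᵥ 𝓛 *ᵥ y = w ⬝ᵥ L *ᵥ w := by
        show y ⬝ᵥ (DnegHalf * (D - A) * DnegHalf) *ᵥ y = _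
        rw [hDA, ← mulVec_mulVec, ← mulVec_mulVec, hwvec, dotProduct_mulVec y DnegHalf,
          hwvec']
      rw [h1, h2]
    have hform : w ⬝ᵥ L *ᵥ w = Matrix.toLinearMap₂' ℝ L w w :=
      (Matrix.toLinearMap₂'_apply' _ _ _).symm
    have hnonneg : 0 ≤ star x ⬝ᵥ 𝓛f *ᵥ x := by
      rw [key]
      have := (G.posSemidef_lapMatrix ℝ).dotProduct_mulVec_nonneg w
      simpa using this
    rcases lt_or_eq_of_le hnonneg with h | h
    · exact h
    · exfalso
      have hz : Matrix.toLinearMap₂' ℝ L w w = 0 := by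
        rw [← hform, ← key, ← h]
      have hconst := (G.lapMatrix_toLinearMap₂'_apply'_eq_zero_iff_forall_reachable w).mp hz
      obtain ⟨v, hv⟩ : ∃ v, v ∉ f := by
        by_contra hc
        push_neg at hc
        exact hproper (Finset.eq_univ_iff_forall.mpr hc)
      have hwv : w v = 0 := by simp [hw, hy, hv]
      obtain ⟨i, hi⟩ := Function.ne_iff.mp hx
      have hwi : w (i : Fin n) ≠ 0 := by
        have hyi : y (i : Fin n) = x i := by simp [hy, i.2]
        simp only [hw, hyi]
        exact mul_ne_zero (inv_ne_zero (hsq _).ne') (by simpa using hi)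
      exact hwi ((hconst _ v (hconn.preconnected _ v)).trans hwv)
  exact ⟨hpd, isUnit_iff_isUnit_det _ |>.mpr hpd.det_pos.ne'.isUnit⟩
end

section
/- For a proper nonempty subset f of vertices of a connected graph, the inverse of the restricted normalized Laplacian is given by the heat kernel integral: 𝓛_f⁻¹ = ∫₀^∞ (𝓗_t)_f dt, where (𝓗_t)_f = e^{-t 𝓛_f}. -/
open Matrix MeasureTheory

lemma exp_integral_scalar {μ : ℝ} (hμ : 0 < μ) :
    ∫ t in Set.Ioi (0:ℝ), Real.exp (-t * μ) = μ⁻¹ := by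
  have h := integral_comp_mul_right_Ioi (fun x => Real.exp (-x)) 0 hμ
  simp only [zero_mul, neg_mul] at h ⊢
  rw [show (fun t : ℝ => Real.exp (-(t * μ))) = fun t => (fun x => Real.exp (-x)) (t * μ) from rfl]
  rw [h, integral_exp_neg_Ioi_zero, smul_eq_mul, mul_one]

lemma posdef_inv_eq_integral_exp {m : Type*} [Fintype m] [DecidableEq m]
    {M : Matrix m m ℝ} (hpd : M.PosDef) (i j : m) :
    M⁻¹ i j = ∫ t in Set.Ioi (0:ℝ), (NormedSpace.exp (-t • M)) i j := by
  have hH : M.IsHermitian := hpd.1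
  set μ : m → ℝ := hH.eigenvalues with hμdef
  set U : Matrix m m ℝ := (hH.eigenvectorUnitary : Matrix m m ℝ) with hUdef
  have hspec : M = U * diagonal μ * star U := by
    have := hH.spectral_theorem
    simpa [RCLike.ofReal_real_eq_id] using this
  have hUU : U * star U = 1 := Matrix.mem_unitaryGroup_iff.mp hH.eigenvectorUnitary.2
  have hUU' : star U * U = 1 := Matrix.mem_unitaryGroup_iff'.mp hH.eigenvectorUnitary.2
  have hμpos : ∀ k, 0 < μ k := hpd.eigenvalues_pos
  have hentry : ∀ (d : m → ℝ), (U * diagonal d * star U) i j = ∑ k, U i k * d k * U j k := by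
    intro d
    rw [Matrix.mul_apply]
    refine Finset.sum_congr rfl fun k _ => ?_
    rw [Matrix.mul_diagonal, Matrix.star_apply, star_trivial]
  have hinv : M⁻¹ = U * diagonal (fun k => (μ k)⁻¹) * star U := by
    apply inv_eq_right_inv
    rw [hspec, mul_assoc (U * diagonal μ),
      show star U * (U * diagonal (fun k => (μ k)⁻¹) * star U)
          = diagonal (fun k => (μ k)⁻¹) * star U by
        rw [← mul_assoc, ← mul_assoc, hUU', one_mul],
      ← mul_assoc, mul_assoc U, diagonal_mul_diagonal,
      show (fun k => μ k * (μ k)⁻¹) = fun _ => (1:ℝ) from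
        funext fun k => mul_inv_cancel₀ (hμpos k).ne',
      diagonal_one, mul_one, hUU]
  have hexp : ∀ t : ℝ,
      NormedSpace.exp (-t • M) = U * diagonal (fun k => Real.exp (-t * μ k)) * star U := by
    intro t
    have h1 : -t • M = U * diagonal (fun k => -t * μ k) * star U := by
      rw [hspec, ← smul_mul_assoc, ← mul_smul_comm, ← diagonal_smul]
      congr 1
    let Uu : (Matrix m m ℝ)ˣ := ⟨U, star U, hUU, hUU'⟩
    have h2 : -t • M = (Uu : Matrix m m ℝ) * diagonal (fun k => -t * μ k)
        * ((Uu⁻¹ : (Matrix m m ℝ)ˣ) : Matrix m m ℝ) := h1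
    rw [h2, Matrix.exp_units_conj, Matrix.exp_diagonal]
    have h3 : NormedSpace.exp (fun k => -t * μ k) = fun k => Real.exp (-t * μ k) :=
      funext fun k => by rw [Pi.coe_exp, ← Real.exp_eq_exp_ℝ]
    show U * diagonal (NormedSpace.exp fun k => -t * μ k) * star U = _
    rw [h3]
  have hint : ∀ k, IntegrableOn (fun t : ℝ => U i k * Real.exp (-t * μ k) * U j k)
      (Set.Ioi (0:ℝ)) := by
    intro k
    have h0 : IntegrableOn (fun t : ℝ => Real.exp (-t * μ k)) (Set.Ioi (0:ℝ)) := by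
      have := exp_neg_integrableOn_Ioi 0 (hμpos k)
      simpa [neg_mul, mul_comm] using this
    exact (h0.const_mul _).mul_const _
  calc M⁻¹ i j = ∑ k, U i k * (μ k)⁻¹ * U j k := by rw [hinv, hentry]
    _ = ∑ k, ∫ t in Set.Ioi (0:ℝ), U i k * Real.exp (-t * μ k) * U j k := by
        refine Finset.sum_congr rfl fun k _ => ?_
        rw [integral_mul_const, integral_const_mul, exp_integral_scalar (hμpos k)]
    _ = ∫ t in Set.Ioi (0:ℝ), ∑ k, U i k * Real.exp (-t * μ k) * U j k := by
        rw [MeasureTheory.integral_finset_sum _ (fun k _ => hint k)]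
    _ = ∫ t in Set.Ioi (0:ℝ), (NormedSpace.exp (-t • M)) i j := by
        refine setIntegral_congr_fun measurableSet_Ioi fun t _ => ?_
        rw [hexp t, hentry]

lemma restricted_normalized_laplacian_posDef
    (n : ℕ) (G : SimpleGraph (Fin n)) [DecidableRel G.Adj]
    (hconn : G.Connected) (hdeg : ∀ i, 0 < G.degree i)
    (f : Finset (Fin n)) (hproper : f ≠ Finset.univ)
    {L : Matrix {i // i ∈ f} {i // i ∈ f} ℝ}
    (hLdef : L = (((Matrix.diagonal fun i => (Real.sqrt (G.degree i : ℝ))⁻¹)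
        * ((Matrix.diagonal fun i => ((G.degree i : ℝ))) - G.adjMatrix ℝ)
        * (Matrix.diagonal fun i => (Real.sqrt (G.degree i : ℝ))⁻¹)).submatrix
        (fun i : {i // i ∈ f} => (i : Fin n)) (fun i : {i // i ∈ f} => (i : Fin n)))) :
    L.PosDef := by
  subst hLdef
  set A : Matrix (Fin n) (Fin n) ℝ := G.adjMatrix ℝ with hA
  set D : Matrix (Fin n) (Fin n) ℝ := Matrix.diagonal fun i => (G.degree i : ℝ) with hD
  set DnegHalf : Matrix (Fin n) (Fin n) ℝ :=
      Matrix.diagonal fun i => (Real.sqrt (G.degree i : ℝ))⁻¹ with hDnh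
  set 𝓛 : Matrix (Fin n) (Fin n) ℝ := DnegHalf * (D - A) * DnegHalf with h𝓛
  set 𝓛f : Matrix {i // i ∈ f} {i // i ∈ f} ℝ :=
      𝓛.submatrix (fun i => (i : Fin n)) (fun i => (i : Fin n)) with h𝓛f
  have hLap : D - A = G.lapMatrix ℝ := rfl
  have hsymL : 𝓛ᵀ = 𝓛 := by
    rw [h𝓛, transpose_mul, transpose_mul, hDnh, diagonal_transpose, transpose_sub, hD,
      diagonal_transpose, hA, SimpleGraph.transpose_adjMatrix, mul_assoc]
  have hherm : 𝓛f.IsHermitian := by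
    rw [Matrix.IsHermitian, conjTranspose_eq_transpose_of_trivial, h𝓛f,
      Matrix.transpose_submatrix, hsymL]
  rw [Matrix.posDef_iff_dotProduct_mulVec]
  refine ⟨hherm, fun x hx => ?_⟩
  rw [star_trivial]
  set y : Fin n → ℝ := fun i => if h : i ∈ f then x ⟨i, h⟩ else 0 with hy
  have hysum : ∀ w : Fin n → ℝ, (∑ i, y i * w i) = ∑ p : {i // i ∈ f}, x p * w p := by
    intro w
    calc ∑ i : Fin n, y i * w i = ∑ i ∈ f, y i * w i :=
          (Finset.sum_subset (Finset.subset_univ f) (fun i _ hif => by simp [hy, hif])).symm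
      _ = ∑ p : {i // i ∈ f}, y p * w p := (Finset.sum_coe_sort f _).symm
      _ = ∑ p : {i // i ∈ f}, x p * w p :=
          Finset.sum_congr rfl fun p _ => by simp [hy, p.2]
  have hkey : x ⬝ᵥ (𝓛f *ᵥ x) = y ⬝ᵥ (𝓛 *ᵥ y) := by
    simp only [dotProduct, mulVec, dotProduct]
    rw [hysum (fun i => ∑ j, 𝓛 i j * y j)]
    apply Finset.sum_congr rfl
    intro p _
    congr 1
    have h1 : (∑ j, 𝓛 (p : Fin n) j * y j) = ∑ q : {i // i ∈ f}, x q * 𝓛 (p : Fin n) q := by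
      rw [← hysum (fun j => 𝓛 (p : Fin n) j)]
      exact Finset.sum_congr rfl fun j _ => mul_comm _ _
    rw [h1]
    exact Finset.sum_congr rfl fun q _ => by rw [h𝓛f, submatrix_apply]; ring
  rw [hkey]
  set z : Fin n → ℝ := DnegHalf *ᵥ y with hz
  have hquad : y ⬝ᵥ (𝓛 *ᵥ y) = z ⬝ᵥ (G.lapMatrix ℝ *ᵥ z) := by
    rw [h𝓛, hLap, ← mulVec_mulVec, ← mulVec_mulVec]
    simp only [dotProduct, hz, hDnh, mulVec_diagonal]
    exact Finset.sum_congr rfl fun i _ => by ring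
  have hpsd : 0 ≤ z ⬝ᵥ (G.lapMatrix ℝ *ᵥ z) := by
    have := (SimpleGraph.posSemidef_lapMatrix ℝ G).dotProduct_mulVec_nonneg z
    simpa using this
  have hne0 : z ⬝ᵥ (G.lapMatrix ℝ *ᵥ z) ≠ 0 := by
    intro h0
    have hreach : ∀ i j : Fin n, G.Reachable i j → z i = z j := by
      rw [← SimpleGraph.lapMatrix_toLinearMap₂'_apply'_eq_zero_iff_forall_reachable]
      rwa [Matrix.toLinearMap₂'_apply']
    obtain ⟨i0, hi0⟩ : ∃ i, i ∉ f := by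
      by_contra h
      push_neg at h
      exact hproper (Finset.eq_univ_iff_forall.mpr h)
    have hz0 : ∀ j, z j = 0 := by
      intro j
      have := hreach j i0 (hconn.preconnected j i0)
      rw [this, hz]
      simp [hDnh, mulVec_diagonal, hy, hi0]
    have hy0 : ∀ j, y j = 0 := by
      intro j
      have hj := hz0 j
      rw [hz, hDnh, mulVec_diagonal] at hj
      have hpos : (0:ℝ) < Real.sqrt (G.degree j : ℝ) :=
        Real.sqrt_pos.mpr (by exact_mod_cast hdeg j)
      have : (Real.sqrt (G.degree j : ℝ))⁻¹ ≠ 0 := by positivity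
      exact (mul_eq_zero.mp hj).resolve_left this
    apply hx
    funext p
    have := hy0 (p : Fin n)
    simpa [hy, p.2] using this
  rw [hquad]
  exact lt_of_le_of_ne hpsd (Ne.symm hne0)

theorem restricted_laplacian_inverse_heat_kernel_integral
    (n : ℕ) (G : SimpleGraph (Fin n)) [DecidableRel G.Adj]
    (hconn : G.Connected) (hdeg : ∀ i, 0 < G.degree i)
    (f : Finset (Fin n)) (hne : f.Nonempty) (hproper : f ≠ Finset.univ) :
    let A : Matrix (Fin n) (Fin n) ℝ := G.adjMatrix ℝ
    let D : Matrix (Fin n) (Fin n) ℝ := Matrix.diagonal fun i => (G.degree i : ℝ)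
    let DnegHalf : Matrix (Fin n) (Fin n) ℝ :=
      Matrix.diagonal fun i => (Real.sqrt (G.degree i : ℝ))⁻¹
    let 𝓛 : Matrix (Fin n) (Fin n) ℝ := DnegHalf * (D - A) * DnegHalf
    let 𝓛f : Matrix {i // i ∈ f} {i // i ∈ f} ℝ :=
      𝓛.submatrix (fun i => (i : Fin n)) (fun i => (i : Fin n))
    ∀ i j, 𝓛f⁻¹ i j = ∫ t in Set.Ioi (0 : ℝ), (NormedSpace.exp (-t • 𝓛f)) i j := by
  intro A D DnegHalf 𝓛 𝓛f i j
  exact posdef_inv_eq_integral_exp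
    (restricted_normalized_laplacian_posDef n G hconn hdeg f hproper rfl) i j
end
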